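/- Equivalence of the generalized eigenvalue problem and the transfer-matrix recursion: for every λ ∈ ℂ and every function u : ℤ → ℂ², one has (Uu)(x) = e^{iλ}u(x) for all x ∈ ℤ if and only if (Ju)(x+1) = T_λ(x)·(Ju)(x) for all x ∈ ℤ. -/

import Mathlib

open Complex Filter

/-- Equivalence of the generalized eigenvalue problem `U u = e^{iλ} u` and the
transfer-matrix recursion `(Ju)(x+1) = T_λ(x) (Ju)(x)`, where
`(Ju)(x) = (u₂(x−1), u₁(x))` and
`T_λ(x) = ρ(x)⁻¹ [[e^{iλ}, α(x)], [conj(α(x)), e^{−iλ}]]`. -/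
theorem generalized_eigenvalue_transfer_matrix_equiv
    (α : ℤ → ℂ) (h01 : ∀ x : ℤ, 0 < ‖α x‖) (h02 : ∀ x : ℤ, ‖α x‖ < 1)
    (ρ : ℤ → ℝ) (hρ : ∀ x : ℤ, ρ x = Real.sqrt (1 - ‖α x‖ ^ 2))
    (lam : ℂ) (u : ℤ → ℂ × ℂ) :
    (∀ x : ℤ,
      (ρ (x - 1) : ℂ) * (u (x - 1)).1 + (starRingEnd ℂ) (α (x - 1)) * (u (x - 1)).2
          = Complex.exp (Complex.I * lam) * (u x).1 ∧
        -(α (x + 1)) * (u (x + 1)).1 + (ρ (x + 1) : ℂ) * (u (x + 1)).2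
          = Complex.exp (Complex.I * lam) * (u x).2)
    ↔ (∀ x : ℤ,
      (((u x).2, (u (x + 1)).1) : ℂ × ℂ)
        = ((ρ x : ℂ)⁻¹ * (Complex.exp (Complex.I * lam) * (u (x - 1)).2 + α x * (u x).1),
            (ρ x : ℂ)⁻¹ * ((starRingEnd ℂ) (α x) * (u (x - 1)).2
              + Complex.exp (-(Complex.I * lam)) * (u x).1))) := by
  have hρpos : ∀ x : ℤ, 0 < ρ x := by
    intro x; rw [hρ]; exact Real.sqrt_pos.2 (by nlinarith [h02 x, norm_nonneg (α x)])
  have hne : ∀ x : ℤ, (ρ x : ℂ) ≠ 0 := fun x => by exact_mod_cast (hρpos x).ne'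
  have hkey : ∀ x : ℤ, (ρ x : ℂ) * (ρ x : ℂ) = 1 - α x * (starRingEnd ℂ) (α x) := by
    intro x
    have h1 : ρ x * ρ x = 1 - ‖α x‖ ^ 2 := by
      rw [hρ]; exact Real.mul_self_sqrt (by nlinarith [h02 x, norm_nonneg (α x)])
    have h2 : α x * (starRingEnd ℂ) (α x) = ((‖α x‖ ^ 2 : ℝ) : ℂ) := by
      rw [Complex.mul_conj]
      norm_cast
      rw [Complex.normSq_eq_norm_sq]
    rw [h2, ← Complex.ofReal_mul, h1]
    push_cast; ring
  have hexp : Complex.exp (Complex.I * lam) * Complex.exp (-(Complex.I * lam)) = 1 := by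
    rw [← Complex.exp_add]; simp
  have hexpne : Complex.exp (Complex.I * lam) ≠ 0 := Complex.exp_ne_zero _
  constructor
  · intro h x
    have hA := (h (x + 1)).1
    have hB := (h (x - 1)).2
    simp only [add_sub_cancel_right, sub_add_cancel] at hA hB
    have h1 : (u x).2 = (ρ x : ℂ)⁻¹ *
        (Complex.exp (Complex.I * lam) * (u (x - 1)).2 + α x * (u x).1) := by
      rw [eq_inv_mul_iff_mul_eq₀ (hne x)]
      linear_combination hB
    have h2 : (u (x + 1)).1 = (ρ x : ℂ)⁻¹ * ((starRingEnd ℂ) (α x) * (u (x - 1)).2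
        + Complex.exp (-(Complex.I * lam)) * (u x).1) := by
      rw [eq_inv_mul_iff_mul_eq₀ (hne x)]
      apply mul_left_cancel₀ hexpne
      linear_combination (-(ρ x : ℂ)) * hA + (starRingEnd ℂ) (α x) * hB
        - (u x).1 * hexp + (u x).1 * hkey x
    rw [Prod.ext_iff]
    exact ⟨h1, h2⟩
  · intro h
    have hm : ∀ y : ℤ,
        (ρ y : ℂ) * (u y).2
            = Complex.exp (Complex.I * lam) * (u (y - 1)).2 + α y * (u y).1 ∧
          (ρ y : ℂ) * (u (y + 1)).1
            = (starRingEnd ℂ) (α y) * (u (y - 1)).2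
              + Complex.exp (-(Complex.I * lam)) * (u y).1 := by
      intro y
      have hy := h y
      rw [Prod.mk.injEq] at hy
      constructor
      · rw [hy.1, mul_inv_cancel_left₀ (hne y)]
      · rw [hy.2, mul_inv_cancel_left₀ (hne y)]
    intro x
    have hC := (hm (x - 1)).1
    have hD := (hm (x - 1)).2
    have hC' := (hm (x + 1)).1
    simp only [sub_add_cancel, add_sub_cancel_right] at hD hC'
    constructor
    · apply mul_left_cancel₀ (hne (x - 1))
      linear_combination (starRingEnd ℂ) (α (x - 1)) * hC - Complex.exp (Complex.I * lam) * hD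
        + (u (x - 1)).1 * hkey (x - 1) - (u (x - 1)).1 * hexp
    · linear_combination hC'
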